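/- Let $S(z)=\frac{-iz+i}{z+1}$, let $G=\{x+iy\in\mathbb{C} : y>|x|^{3/2}\}$, and let $K=\{z\in\mathbb{D} : S(z)\in G\}$. Then $1\in\overline{K}$ and $K$ is a convergence set for $g(z)=e^{\frac{z+1}{z-1}}$ at $1$ in which $g$ approaches $0$: namely, $g(z)\to 0$ as $z\to 1$ with $z\in K$. -/

import Mathlib

open Set Metric Filter

/-- Key real inequality: in the cusp region with small `y`, `-y/(x²+y²)` is very negative. -/
lemma cusp_key_ineq {x y c : ℝ} (hc : 1 ≤ c) (hxy : |x| ^ ((3:ℝ)/2) < y)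
    (hy : y ≤ ((2*c)⁻¹)^3) : -y / (x*x + y*y) ≤ -c := by
  have hx0 : (0:ℝ) ≤ |x| ^ ((3:ℝ)/2) := Real.rpow_nonneg (abs_nonneg x) _
  have hy0 : 0 < y := lt_of_le_of_lt hx0 hxy
  have hc0 : (0:ℝ) < 2*c := by linarith
  have h6 : x^6 < y^4 := by
    have h := pow_lt_pow_left₀ hxy hx0 (n := 4) (by norm_num)
    have hax : (|x| ^ ((3:ℝ)/2))^(4:ℕ) = x^6 := by
      rw [← Real.rpow_natCast (|x| ^ ((3:ℝ)/2)) 4, ← Real.rpow_mul (abs_nonneg x)]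
      norm_num
      have h := Real.rpow_natCast |x| 6
      push_cast at h
      rw [← abs_pow, abs_of_nonneg (by positivity : (0:ℝ) ≤ x^6)]
    rw [hax] at h
    exact h
  have h2 : (0:ℝ) < (2*c)⁻¹ := by positivity
  have hinv : ((2*c)⁻¹)^3 ≤ (2*c)⁻¹ := by
    have h1 : (2*c)⁻¹ ≤ 1 := by
      rw [inv_le_one_iff₀]; right; linarith
    calc ((2*c)⁻¹)^3 ≤ ((2*c)⁻¹)^1 := pow_le_pow_of_le_one h2.le h1 (by norm_num)
      _ = (2*c)⁻¹ := pow_one _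
  have hx2 : x^2 ≤ y/(2*c) := by
    have h3 : (x^2)^3 ≤ (y/(2*c))^3 := by
      have h4 : y^4 ≤ y^3 * ((2*c)⁻¹)^3 := by nlinarith [pow_pos hy0 3]
      calc (x^2)^3 = x^6 := by ring
        _ ≤ y^3 * ((2*c)⁻¹)^3 := le_trans h6.le h4
        _ = (y/(2*c))^3 := by rw [div_eq_mul_inv]; ring
    exact le_of_pow_le_pow_left₀ (by norm_num) (by positivity) h3
  have hy2 : y^2 ≤ y/(2*c) := by
    have hyle : y ≤ (2*c)⁻¹ := le_trans hy hinv
    calc y^2 = y*y := sq y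
      _ ≤ y * (2*c)⁻¹ := by nlinarith
      _ = y/(2*c) := by rw [div_eq_mul_inv]
  have hsum : x*x + y*y ≤ y / c := by
    have hh : y/(2*c) + y/(2*c) = y/c := by field_simp; ring
    nlinarith
  have hpos : 0 < x*x + y*y := by nlinarith
  rw [neg_div, neg_le_neg_iff, le_div_iff₀ hpos]
  calc c * (x*x+y*y) ≤ c * (y/c) := by nlinarith
    _ = y := by field_simp

/-- Real points of `(0,1)` lie in the cusp region `K`. -/
lemma real_mem_cusp {t : ℝ} (h0 : 0 ≤ t) (h1 : t < 1) :
    (t:ℂ) ∈ {z ∈ ball (0:ℂ) 1 |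
        |((-Complex.I * z + Complex.I) / (z + 1)).re| ^ ((3:ℝ)/2) <
          ((-Complex.I * z + Complex.I) / (z + 1)).im} := by
  have ht1 : ((t:ℂ) + 1) ≠ 0 := by
    intro h
    have : (t:ℂ) = -1 := by linear_combination h
    have : t = -1 := by exact_mod_cast this
    linarith
  have hS : (-Complex.I * (t:ℂ) + Complex.I) / ((t:ℂ) + 1)
      = (((1 - t)/(1 + t) : ℝ) : ℂ) * Complex.I := by
    have ht1' : ((1:ℂ) + (t:ℂ)) ≠ 0 := by
      intro h
      have : (t:ℂ) = -1 := by linear_combination h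
      have : t = -1 := by exact_mod_cast this
      linarith
    rw [div_eq_iff ht1]
    push_cast
    field_simp
    ring
  constructor
  · simp only [mem_ball, Complex.dist_eq, sub_zero, Complex.norm_real, Real.norm_eq_abs]
    rwa [abs_of_nonneg h0]
  · rw [hS]
    simp only [Complex.mul_re, Complex.mul_im, Complex.ofReal_re, Complex.ofReal_im,
      Complex.I_re, Complex.I_im]
    norm_num
    exact div_pos (by linarith) (by linarith)

theorem cusp_region_is_convergence_set_for_g :
    (1:ℂ) ∈ closure {z ∈ ball (0:ℂ) 1 |
        |((-Complex.I * z + Complex.I) / (z + 1)).re| ^ ((3:ℝ)/2) <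
          ((-Complex.I * z + Complex.I) / (z + 1)).im} ∧
      Tendsto (fun z : ℂ => Complex.exp ((z + 1) / (z - 1)))
        (nhdsWithin 1 {z ∈ ball (0:ℂ) 1 |
          |((-Complex.I * z + Complex.I) / (z + 1)).re| ^ ((3:ℝ)/2) <
            ((-Complex.I * z + Complex.I) / (z + 1)).im})
        (nhds 0) := by
  set S : ℂ → ℂ := fun z => (-Complex.I * z + Complex.I) / (z + 1) with hSdef
  set K : Set ℂ := {z ∈ ball (0:ℂ) 1 |
      |((-Complex.I * z + Complex.I) / (z + 1)).re| ^ ((3:ℝ)/2) <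
        ((-Complex.I * z + Complex.I) / (z + 1)).im} with hKdef
  -- basic facts about points of K
  have hKball : ∀ z ∈ K, z ∈ ball (0:ℂ) 1 := fun z hz => hz.1
  have hz_ne : ∀ z ∈ K, z ≠ 1 ∧ z + 1 ≠ 0 := by
    intro z hz
    have hb := hKball z hz
    simp only [mem_ball, Complex.dist_eq, sub_zero] at hb
    constructor
    · intro h; rw [h] at hb; simp at hb
    · intro h
      have : z = -1 := by linear_combination h
      rw [this] at hb; simp at hb
  -- the identity Re((z+1)/(z-1)) = -(S z).im / normSq (S z)
  have hre : ∀ z : ℂ, z ≠ 1 → z + 1 ≠ 0 →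
      ((z + 1) / (z - 1)).re = -(S z).im / ((S z).re * (S z).re + (S z).im * (S z).im) := by
    intro z h1 h2
    have h1' : z - 1 ≠ 0 := sub_ne_zero.mpr h1
    have hnum : -Complex.I * z + Complex.I ≠ 0 := by
      intro h
      apply h1
      have hz0 : Complex.I * (1 - z) = 0 := by linear_combination h
      have := (mul_eq_zero.mp hz0).resolve_left Complex.I_ne_zero
      have : z = 1 := by linear_combination -this
      exact this
    have hS0 : S z ≠ 0 := div_ne_zero hnum h2
    have hmul : (z + 1) / (z - 1) * S z = -Complex.I := by
      rw [hSdef]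
      field_simp
      ring
    have hid : (z + 1) / (z - 1) = -Complex.I / S z := (eq_div_iff hS0).mpr hmul
    rw [hid, Complex.div_re]
    have hnsq : Complex.normSq (S z) = (S z).re * (S z).re + (S z).im * (S z).im :=
      Complex.normSq_apply _
    rw [hnsq]
    simp [Complex.neg_re, Complex.neg_im, Complex.I_re, Complex.I_im]
  constructor
  · -- 1 ∈ closure K
    rw [mem_closure_iff_seq_limit]
    refine ⟨fun n => ((1 - ((n:ℝ)+1)⁻¹ : ℝ) : ℂ), fun n => ?_, ?_⟩
    · apply real_mem_cusp
      · have h1 : ((n:ℝ)+1)⁻¹ ≤ 1 := by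
          rw [inv_le_one_iff₀]; right
          have : (0:ℝ) ≤ n := Nat.cast_nonneg n
          linarith
        linarith
      · have : 0 < ((n:ℝ)+1)⁻¹ := by positivity
        linarith
    · have h1 : Tendsto (fun n : ℕ => (1 - ((n:ℝ)+1)⁻¹ : ℝ)) atTop (nhds 1) := by
        have := tendsto_one_div_add_atTop_nhds_zero_nat (𝕜 := ℝ)
        simp only [one_div] at this
        have h2 := tendsto_const_nhds (f := atTop (α := ℕ)) (x := (1:ℝ))
        have := h2.sub this
        simpa using this
      have h2 := (Complex.continuous_ofReal.tendsto 1).comp h1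
      simpa [Function.comp_def] using h2
  · -- the tendsto statement
    have hnorm : Tendsto (fun z : ℂ => ((z + 1) / (z - 1)).re)
        (nhdsWithin 1 K) atBot := by
      -- S tends to 0 on K near 1
      have hScont : Tendsto S (nhdsWithin 1 K) (nhds 0) := by
        have hc : ContinuousAt S 1 := by
          apply ContinuousAt.div
          · fun_prop
          · fun_prop
          · norm_num
        have hS1 : S 1 = 0 := by simp [hSdef]
        have := hc.continuousWithinAt (s := K)
        rw [ContinuousWithinAt, hS1] at this
        exact this
      have hIm : Tendsto (fun z => (S z).im) (nhdsWithin 1 K) (nhds 0) := by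
        have := (Complex.continuous_im.tendsto 0).comp hScont
        simpa [Function.comp_def] using this
      rw [tendsto_atBot]
      intro b
      set c : ℝ := max 1 (-b) with hcdef
      have hc1 : 1 ≤ c := le_max_left _ _
      have hcb : -b ≤ c := le_max_right _ _
      have hεpos : (0:ℝ) < ((2*c)⁻¹)^3 := by positivity
      have hev1 : ∀ᶠ z in nhdsWithin 1 K, (S z).im ≤ ((2*c)⁻¹)^3 :=
        hIm.eventually (eventually_le_nhds hεpos)
      have hev2 : ∀ᶠ z in nhdsWithin 1 K, z ∈ K := eventually_mem_nhdsWithin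
      filter_upwards [hev1, hev2] with z hz1 hz2
      obtain ⟨hne1, hne2⟩ := hz_ne z hz2
      rw [hre z hne1 hne2]
      have hcusp : |(S z).re| ^ ((3:ℝ)/2) < (S z).im := hz2.2
      have := cusp_key_ineq hc1 hcusp hz1
      linarith
    rw [tendsto_zero_iff_norm_tendsto_zero]
    have heq : ∀ z : ℂ, ‖Complex.exp ((z + 1) / (z - 1))‖
        = Real.exp (((z + 1) / (z - 1)).re) := fun z => Complex.norm_exp _
    simp only [heq]
    exact Real.tendsto_exp_comp_nhds_zero.mpr hnorm
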